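/- Let 0 < q < 1, let ν be a positive integer and let z ∈ ℂ. Then for every t ∈ ℂ, −((1−q)^ν/log q)·(ν−1)!·e^{t/(1−q)} − t^ν·Σ_{n=1}^∞ q^{ν(n−z)}·e^{t·[n−z]_q} = −((ν−1)!/log q)·Σ_{n=0}^{ν−2} (1−q)^{ν−n}·t^n/n! + t^{ν−1}·Σ_{m=0}^∞ (−1)^m·B_m^{(ν)}(z;q)·t^m/m!, where the series on the right-hand side converges absolutely for every t ∈ ℂ (for ν = 1 the finite sum is empty). -/

import Mathlib

open Complex

/-- `q^w := exp(w · log q)` with the real logarithm of `q`. -/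
noncomputable def qpow (q : ℝ) (w : ℂ) : ℂ := Complex.exp (w * Real.log q)

/-- `[w]_q := (1 - q^w)/(1 - q)`. -/
noncomputable def qbr (q : ℝ) (w : ℂ) : ℂ := (1 - qpow q w) / (1 - (q : ℂ))

/-- the `q`-Bernoulli polynomial `B_m^{(ν)}(z;q)` (closed form). -/
noncomputable def Bq (q : ℝ) (ν : ℕ) (z : ℂ) (m : ℕ) : ℂ :=
  ((q : ℂ) - 1) ^ ((1 : ℤ) - m) *
    ((∑ l ∈ Finset.Icc 1 m, (-1) ^ l * (Nat.choose m l : ℂ) * (l : ℂ) *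
        qpow q (z * (1 - (l : ℂ) - (ν : ℂ))) / (1 - qpow q (1 - (l : ℂ) - (ν : ℂ)))) +
      (1 / (Nat.choose (m + ν - 1) (ν - 1) : ℂ)) * (1 / (Real.log q : ℂ)))



lemma qpow_add' (q : ℝ) (a b : ℂ) : qpow q (a + b) = qpow q a * qpow q b := by
  simp [qpow, add_mul, Complex.exp_add]

lemma qpow_nat_mul' (q : ℝ) (k : ℕ) (w : ℂ) : qpow q ((k : ℂ) * w) = qpow q w ^ k := by
  simp [qpow, mul_assoc, Complex.exp_nat_mul]

lemma qpow_neg' (q : ℝ) (w : ℂ) : qpow q (-w) = (qpow q w)⁻¹ := by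
  simp [qpow, Complex.exp_neg]

lemma norm_qpow {q : ℝ} (hq0 : 0 < q) (w : ℂ) : ‖qpow q w‖ = q ^ w.re := by
  rw [qpow, Complex.norm_exp, Real.rpow_def_of_pos hq0]
  simp [Complex.mul_re, mul_comm]

lemma qpow_one' {q : ℝ} (hq0 : 0 < q) : qpow q 1 = (q : ℂ) := by
  rw [qpow, one_mul, ← Complex.ofReal_exp, Real.exp_log hq0]

lemma qpow_nat {q : ℝ} (hq0 : 0 < q) (k : ℕ) : qpow q (k : ℂ) = (q : ℂ) ^ k := by
  rw [← qpow_one' hq0, ← qpow_nat_mul']; norm_num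

/-- the summand `q^{z(1-l-ν)}/(1-q^{1-l-ν})`. -/
noncomputable def Qf (q : ℝ) (ν : ℕ) (z : ℂ) (l : ℕ) : ℂ :=
  qpow q (z * (1 - (l:ℂ) - (ν:ℂ))) / (1 - qpow q (1 - (l:ℂ) - (ν:ℂ)))

noncomputable def xf (q : ℝ) (z : ℂ) (n : ℕ) : ℂ := qpow q ((n:ℂ) + 1 - z)

lemma norm_xf {q : ℝ} (hq0 : 0 < q) (z : ℂ) (n : ℕ) :
    ‖xf q z n‖ = q ^ (1 - z.re) * q ^ n := by
  rw [xf, norm_qpow hq0]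
  have : ((n:ℂ) + 1 - z).re = (1 - z.re) + (n:ℝ) := by simp; ring
  rw [this, Real.rpow_add hq0, Real.rpow_natCast]

lemma exp_tsum (w : ℂ) : Complex.exp w = ∑' i : ℕ, w ^ i / (Nat.factorial i : ℂ) := by
  rw [Complex.exp_eq_exp_ℂ, NormedSpace.exp_eq_tsum_div]

lemma summable_norm_exp_div (w : ℂ) :
    Summable fun i : ℕ => ‖w ^ i / (Nat.factorial i : ℂ)‖ := by
  have := Real.summable_pow_div_factorial ‖w‖
  refine this.congr fun i => ?_
  rw [norm_div, norm_pow]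
  norm_num

lemma Qf_eq {q : ℝ} (hq0 : 0 < q) (hq1 : q < 1) {ν : ℕ} (hν : 0 < ν) (z : ℂ) (l : ℕ) :
    Qf q ν z (l + 1) = -∑' n : ℕ, xf q z n ^ (l + ν) := by
  have hqlt : |q| < 1 := by rw [abs_of_pos hq0]; exact hq1
  set c : ℂ := (q:ℂ) ^ (l + ν) with hc
  have hcnorm : ‖c‖ < 1 := by
    rw [hc, norm_pow, Complex.norm_real, Real.norm_eq_abs]
    exact pow_lt_one₀ (abs_nonneg q) hqlt (by omega)
  have hc0 : c ≠ 0 := pow_ne_zero _ (by exact_mod_cast hq0.ne')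
  have hc1 : (1 : ℂ) - c ≠ 0 := by
    intro h
    have : c = 1 := by linear_combination -h
    rw [this] at hcnorm; simp at hcnorm
  have he : (1 : ℂ) - ((l:ℂ)+1) - (ν:ℂ) = -(((l + ν : ℕ)):ℂ) := by push_cast; ring
  have hden : qpow q (1 - ((l+1:ℕ):ℂ) - (ν:ℂ)) = c⁻¹ := by
    push_cast
    rw [he, qpow_neg', qpow_nat hq0]
  have hA : qpow q (z * (1 - ((l+1:ℕ):ℂ) - (ν:ℂ))) = qpow q (-(z * ((l + ν : ℕ)))) := by
    push_cast
    congr 1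
    ring
  rw [Qf, hden, hA]
  have hterm : ∀ n : ℕ, qpow q (-(z * ((l + ν : ℕ)))) * c ^ (n + 1) = xf q z n ^ (l + ν) := by
    intro n
    have h1 : c ^ (n+1) = qpow q (((n+1 : ℕ):ℂ) * ((l+ν : ℕ):ℂ)) := by
      rw [qpow_nat_mul', qpow_nat hq0]
    have h2 : xf q z n ^ (l + ν) = qpow q (((l+ν:ℕ):ℂ) * ((n:ℂ) + 1 - z)) := by
      rw [qpow_nat_mul', xf]
    rw [h1, h2, ← qpow_add']
    congr 1
    push_cast
    ring
  have hgeom : ∑' n : ℕ, c ^ n = (1 - c)⁻¹ := tsum_geometric_of_norm_lt_one hcnorm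
  have key : (1 - c⁻¹)⁻¹ = -(c * (1 - c)⁻¹) := by
    have h1 : (1:ℂ) - c⁻¹ = -(c⁻¹ * (1 - c)) := by
      field_simp
      ring
    rw [h1, inv_neg, mul_inv, inv_inv]
  calc qpow q (-(z * ((l + ν : ℕ)))) / (1 - c⁻¹)
      = qpow q (-(z * ((l + ν : ℕ)))) * (1 - c⁻¹)⁻¹ := div_eq_mul_inv _ _
    _ = -(qpow q (-(z * ((l + ν : ℕ)))) * c * ∑' n : ℕ, c ^ n) := by
        rw [key, hgeom]; ring
    _ = -∑' n : ℕ, qpow q (-(z * ((l + ν : ℕ)))) * c * c ^ n := by rw [tsum_mul_left]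
    _ = -∑' n : ℕ, xf q z n ^ (l + ν) := by
        congr 1
        refine tsum_congr fun n => ?_
        rw [← hterm n]; ring

lemma norm_Qf_le {q : ℝ} {ν : ℕ} (z : ℂ) (hq0 : 0 < q) (hq1 : q < 1) (hν : 0 < ν) (l : ℕ) :
    ‖Qf q ν z (l + 1)‖ ≤ (q ^ (1 - z.re)) ^ (l + ν) * (1 - q)⁻¹ := by
  set C := q ^ (1 - z.re) with hC
  have hC0 : 0 < C := Real.rpow_pos_of_pos hq0 _
  have hql : 0 ≤ q ^ (l + ν) := pow_nonneg hq0.le _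
  have hql1 : q ^ (l + ν) < 1 := pow_lt_one₀ hq0.le hq1 (by omega)
  have hnorm : ∀ n : ℕ, ‖xf q z n ^ (l + ν)‖ = C ^ (l + ν) * (q ^ (l + ν)) ^ n := by
    intro n
    rw [norm_pow, norm_xf hq0, mul_pow, ← pow_mul, ← pow_mul, Nat.mul_comm n]
  have hsum : Summable fun n : ℕ => ‖xf q z n ^ (l + ν)‖ := by
    refine Summable.of_nonneg_of_le (fun n => norm_nonneg _) (fun n => le_of_eq (hnorm n))
      ?_
    exact (summable_geometric_of_lt_one hql hql1).mul_left _
  rw [Qf_eq hq0 hq1 hν, norm_neg]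
  calc ‖∑' n : ℕ, xf q z n ^ (l + ν)‖ ≤ ∑' n : ℕ, ‖xf q z n ^ (l + ν)‖ :=
        norm_tsum_le_tsum_norm hsum
    _ = C ^ (l + ν) * ∑' n : ℕ, (q ^ (l + ν)) ^ n := by
        rw [← tsum_mul_left]; exact tsum_congr hnorm
    _ = C ^ (l + ν) * (1 - q ^ (l + ν))⁻¹ := by
        rw [tsum_geometric_of_lt_one hql hql1]
    _ ≤ C ^ (l + ν) * (1 - q)⁻¹ := by
        have h1 : 0 < 1 - q := by linarith
        have h2 : 1 - q ≤ 1 - q ^ (l + ν) := by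
          have h3 : q ^ (l + ν) ≤ q ^ 1 := pow_le_pow_of_le_one hq0.le hq1.le (by omega)
          rw [pow_one] at h3; linarith
        exact mul_le_mul_of_nonneg_left (inv_anti₀ h1 h2) (pow_nonneg hC0.le _)

lemma fact_cast (l j : ℕ) :
    ((l+1+j).factorial : ℝ) = ((l+1+j).choose (l+1) : ℝ) * ((l+1).factorial : ℝ) * (j.factorial : ℝ) := by
  have h := Nat.add_choose_mul_factorial_mul_factorial j (l+1)
  have h2 : j + (l+1) = l+1+j := by omega
  rw [h2] at h
  exact_mod_cast (by rw [← h]; ring : ((l+1+j).factorial : ℕ) = (l+1+j).choose (l+1) * (l+1).factorial * j.factorial)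

lemma fact_cast_c (l j : ℕ) :
    ((l+1+j).factorial : ℂ) = ((l+1+j).choose (l+1) : ℂ) * ((l+1).factorial : ℂ) * (j.factorial : ℂ) := by
  exact_mod_cast congrArg (fun r : ℝ => (r : ℂ)) (fact_cast l j)

set_option maxHeartbeats 2000000 in
lemma gsum {q : ℝ} (hq0 : 0 < q) (hq1 : q < 1) {ν : ℕ} (hν : 0 < ν) (z s : ℂ) :
    Summable (fun m : ℕ => ‖((q:ℂ)-1) * s^m / (Nat.factorial m : ℂ) *
      (∑ l ∈ Finset.Icc 1 m, (-1)^l * (Nat.choose m l : ℂ) * (l:ℂ) * Qf q ν z l)‖) ∧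
    (∑' m : ℕ, ((q:ℂ)-1) * s^m / (Nat.factorial m : ℂ) *
      (∑ l ∈ Finset.Icc 1 m, (-1)^l * (Nat.choose m l : ℂ) * (l:ℂ) * Qf q ν z l))
    = ((q:ℂ)-1) * Complex.exp s * s *
        ∑' n : ℕ, xf q z n ^ ν * Complex.exp (-(s * xf q z n)) := by
  set C := q ^ (1 - z.re) with hC
  have hC0 : 0 < C := Real.rpow_pos_of_pos hq0 _
  have h1q : 0 < 1 - q := by linarith
  set T : ℕ → ℕ → ℂ := fun m l => ((q:ℂ)-1) * s^m / (Nat.factorial m : ℂ) *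
    ((-1)^l * (Nat.choose m l : ℂ) * (l:ℂ) * Qf q ν z l) with hT
  set e : ℕ×ℕ → ℕ×ℕ := fun p => (p.1 + 1 + p.2, p.1 + 1) with he
  have he_inj : Function.Injective e := by
    intro p p' h
    rw [Prod.ext_iff] at h
    simp only [he] at h
    exact Prod.ext (by omega) (by omega)
  have hT0 : ∀ p : ℕ×ℕ, p ∉ Set.range e → T p.1 p.2 = 0 := by
    rintro ⟨m, l⟩ hp
    by_cases h1 : 1 ≤ l ∧ l ≤ m
    · exact absurd ⟨(l-1, m-l), by simp only [he, Prod.ext_iff]; constructor <;> omega⟩ hp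
    · push_neg at h1
      rcases Nat.eq_zero_or_pos l with h0 | h0
      · simp [hT, h0]
      · have : m < l := h1 (by omega)
        simp [hT, Nat.choose_eq_zero_of_lt this]
  -- norm formula along e
  have hkey : ∀ l j : ℕ, ‖T (l+1+j) (l+1)‖ =
      (‖(q:ℂ)-1‖ * ‖s‖^(l+1) * ((l+1) : ℝ) * ‖Qf q ν z (l+1)‖ / ((l+1).factorial : ℝ)) *
        (‖s‖^j / (j.factorial : ℝ)) := by
    intro l j
    have hfj : ((j.factorial : ℝ)) ≠ 0 := by positivity
    have hfl : (((l+1).factorial : ℝ)) ≠ 0 := by positivity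
    have hch : (((l+1+j).choose (l+1) : ℝ)) ≠ 0 := by
      have := Nat.choose_pos (show l+1 ≤ l+1+j by omega)
      positivity
    have h1 : ‖T (l+1+j) (l+1)‖ = ‖(q:ℂ)-1‖ * ‖s‖^(l+1+j) / ((l+1+j).factorial : ℝ) *
        (((l+1+j).choose (l+1) : ℝ) * ((l+1):ℝ) * ‖Qf q ν z (l+1)‖) := by
      simp only [hT, norm_mul, norm_div, norm_pow, norm_neg, norm_one, one_pow, one_mul,
        Complex.norm_natCast]
      push_cast
      ring
    rw [h1, fact_cast l j, pow_add]
    field_simp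
  -- summability of the composed family
  have hasum : Summable fun p : ℕ×ℕ => ‖T (p.1+1+p.2) (p.1+1)‖ := by
    have hF : Summable fun l : ℕ => (‖(q:ℂ)-1‖ * ‖s‖ * C^ν * (1-q)⁻¹) * ((‖s‖*C)^l / (l.factorial : ℝ)) :=
      (Real.summable_pow_div_factorial (‖s‖*C)).mul_left _
    have hG : Summable fun j : ℕ => ‖s‖^j / (j.factorial : ℝ) :=
      Real.summable_pow_div_factorial ‖s‖
    refine Summable.of_nonneg_of_le (fun p => norm_nonneg _) (fun p => ?_)
      (hF.mul_of_nonneg hG (fun l => by positivity) (fun j => by positivity))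
    obtain ⟨l, j⟩ := p
    rw [hkey l j]
    have hA : ‖(q:ℂ)-1‖ * ‖s‖^(l+1) * ((l+1):ℝ) * ‖Qf q ν z (l+1)‖ / ((l+1).factorial : ℝ)
        ≤ (‖(q:ℂ)-1‖ * ‖s‖ * C^ν * (1-q)⁻¹) * ((‖s‖*C)^l / (l.factorial : ℝ)) := by
      have hfs : ((l+1).factorial : ℝ) = ((l+1):ℝ) * (l.factorial : ℝ) := by
        exact_mod_cast Nat.factorial_succ l
      have hfl : (0:ℝ) < (l.factorial : ℝ) := by positivity
      have hQ := norm_Qf_le z hq0 hq1 hν l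
      have hrw : (‖(q:ℂ)-1‖ * ‖s‖ * C^ν * (1-q)⁻¹) * ((‖s‖*C)^l / (l.factorial : ℝ))
          = ‖(q:ℂ)-1‖ * ‖s‖^(l+1) * ((l+1):ℝ) * (C^(l+ν) * (1-q)⁻¹) / ((l+1).factorial : ℝ) := by
        rw [hfs, pow_add, pow_succ, mul_pow]
        field_simp
        ring
      rw [hrw]
      gcongr
    exact mul_le_mul_of_nonneg_right hA (by positivity)
  -- transfer summability through e
  have hTnormsum : Summable fun p : ℕ×ℕ => ‖T p.1 p.2‖ := by
    refine (he_inj.summable_iff (fun x hx => ?_)).mp hasum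
    rw [hT0 x hx, norm_zero]
  have hTsum : Summable fun p : ℕ×ℕ => T p.1 p.2 := hTnormsum.of_norm
  have hg_eq : ∀ m : ℕ, ((q:ℂ)-1) * s^m / (Nat.factorial m : ℂ) *
      (∑ l ∈ Finset.Icc 1 m, (-1)^l * (Nat.choose m l : ℂ) * (l:ℂ) * Qf q ν z l)
      = ∑' l : ℕ, T m l := by
    intro m
    have h0 : ∀ l ∉ Finset.Icc 1 m, T m l = 0 := by
      intro l hl
      rw [Finset.mem_Icc] at hl
      push_neg at hl
      rcases Nat.eq_zero_or_pos l with h0 | h0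
      · simp [hT, h0]
      · have : m < l := hl h0
        simp [hT, Nat.choose_eq_zero_of_lt this]
    rw [tsum_eq_sum h0, Finset.mul_sum]
  have hgnorm : Summable (fun m : ℕ => ‖((q:ℂ)-1) * s^m / (Nat.factorial m : ℂ) *
      (∑ l ∈ Finset.Icc 1 m, (-1)^l * (Nat.choose m l : ℂ) * (l:ℂ) * Qf q ν z l)‖) := by
    refine Summable.of_nonneg_of_le (fun m => norm_nonneg _) (fun m => ?_) hTnormsum.prod
    rw [hg_eq m]
    exact norm_tsum_le_tsum_norm (hTnormsum.prod_factor m)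
  refine ⟨hgnorm, ?_⟩
  -- inner j-sums
  have hinner2 : ∀ l : ℕ, (∑' j : ℕ, T (l+1+j) (l+1))
      = (((q:ℂ)-1) * ((-1)^(l+1) * ((l+1:ℕ):ℂ) * Qf q ν z (l+1)) * s^(l+1) /
          ((l+1).factorial : ℂ)) * Complex.exp s := by
    intro l
    have hfj : ∀ j : ℕ, ((j.factorial : ℂ)) ≠ 0 := fun j => by
      exact_mod_cast j.factorial_ne_zero
    have hfl1 : (((l+1).factorial : ℂ)) ≠ 0 := by
      exact_mod_cast (l+1).factorial_ne_zero
    have hch : ∀ j : ℕ, (((l+1+j).choose (l+1) : ℂ)) ≠ 0 := fun j => by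
      have h := Nat.choose_pos (show l+1 ≤ l+1+j by omega)
      exact_mod_cast h.ne'
    have hterm : ∀ j : ℕ, T (l+1+j) (l+1) =
        (((q:ℂ)-1) * ((-1)^(l+1) * ((l+1:ℕ):ℂ) * Qf q ν z (l+1)) * s^(l+1) /
          ((l+1).factorial : ℂ)) * (s^j / (j.factorial : ℂ)) := by
      intro j
      have hdiv : ((Nat.choose (l+1+j) (l+1) : ℂ)) / (((l+1+j).factorial : ℂ))
          = 1 / (((l+1).factorial : ℂ) * ((j.factorial : ℂ))) := by
        rw [fact_cast_c l j]
        field_simp [hch j, hfl1, hfj j]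
      have hshape : T (l+1+j) (l+1) =
          (((q:ℂ)-1) * ((-1)^(l+1) * ((l+1:ℕ):ℂ) * Qf q ν z (l+1)) * s^(l+1) * s^j) *
            (((l+1+j).choose (l+1) : ℂ) / (((l+1+j).factorial : ℂ))) := by
        simp only [hT, pow_add]
        push_cast
        ring
      rw [hshape, hdiv]
      field_simp
    rw [tsum_congr hterm, tsum_mul_left, ← exp_tsum]
  -- second family
  set b : ℕ → ℕ → ℂ := fun l n => ((q:ℂ)-1) * Complex.exp s *
      ((-1)^l * s^(l+1) / (Nat.factorial l : ℂ) * xf q z n ^ (l+ν)) with hb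
  have hcl : ∀ l : ℕ,
      (((q:ℂ)-1) * ((-1)^(l+1) * ((l+1:ℕ):ℂ) * Qf q ν z (l+1)) * s^(l+1) /
          ((l+1).factorial : ℂ)) * Complex.exp s = ∑' n : ℕ, b l n := by
    intro l
    have hfs : ((l+1).factorial : ℂ) = ((l:ℂ)+1) * (Nat.factorial l : ℂ) := by
      push_cast [Nat.factorial_succ]
      ring
    have hl1 : ((l:ℂ)+1) ≠ 0 := by
      exact_mod_cast (Nat.cast_add_one_ne_zero (R := ℂ) l)
    have hlf : ((Nat.factorial l : ℂ)) ≠ 0 := by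
      exact_mod_cast l.factorial_ne_zero
    have hterm : ∀ n : ℕ, b l n =
        (((q:ℂ)-1) * Complex.exp s * ((-1)^l * s^(l+1) / (Nat.factorial l : ℂ))) *
          xf q z n ^ (l+ν) := by
      intro n
      simp only [hb]
      ring
    rw [tsum_congr hterm, tsum_mul_left, Qf_eq hq0 hq1 hν z l, hfs]
    rw [pow_succ (-1 : ℂ) l]
    push_cast
    field_simp
  -- summability of b on the product
  have hbnorm : Summable fun p : ℕ×ℕ => ‖b p.1 p.2‖ := by
    have hF : Summable fun l : ℕ =>
        (‖(q:ℂ)-1‖ * ‖Complex.exp s‖ * ‖s‖ * C^ν) * ((‖s‖*C)^l / (Nat.factorial l : ℝ)) :=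
      (Real.summable_pow_div_factorial _).mul_left _
    have hG : Summable fun n : ℕ => (q^ν)^n :=
      summable_geometric_of_lt_one (by positivity) (pow_lt_one₀ hq0.le hq1 (by omega))
    refine Summable.of_nonneg_of_le (fun p => norm_nonneg _) (fun p => ?_)
      (hF.mul_of_nonneg hG (fun l => by positivity) (fun n => by positivity))
    obtain ⟨l, n⟩ := p
    have h1 : ‖b l n‖ = ‖(q:ℂ)-1‖ * ‖Complex.exp s‖ *
        (‖s‖^(l+1) / (Nat.factorial l : ℝ)) * (C*q^n)^(l+ν) := by
      simp only [hb, norm_mul, norm_div, norm_pow, norm_neg, norm_one, one_pow,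
        Complex.norm_natCast, norm_xf hq0, ← hC]
      ring
    have h2 : ((C*q^n)^(l+ν) : ℝ) ≤ C^(l+ν) * (q^ν)^n := by
      rw [mul_pow, ← pow_mul, ← pow_mul]
      have h3 : q ^ (n*(l+ν)) ≤ q ^ (ν*n) :=
        pow_le_pow_of_le_one hq0.le hq1.le (by nlinarith)
      have h4 : 0 ≤ C^(l+ν) := by positivity
      nlinarith [pow_nonneg hq0.le (n*(l+ν))]
    calc ‖b l n‖ ≤ ‖(q:ℂ)-1‖ * ‖Complex.exp s‖ *
          (‖s‖^(l+1) / (Nat.factorial l : ℝ)) * (C^(l+ν) * (q^ν)^n) := by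
          rw [h1]; gcongr
      _ = (‖(q:ℂ)-1‖ * ‖Complex.exp s‖ * ‖s‖ * C^ν) * ((‖s‖*C)^l / (Nat.factorial l : ℝ)) *
            (q^ν)^n := by
          rw [pow_succ, pow_add, mul_pow]
          field_simp
  have hbu : Summable (Function.uncurry b) := hbnorm.of_norm
  have hswap : ∑' l : ℕ, ∑' n : ℕ, b l n = ∑' n : ℕ, ∑' l : ℕ, b l n :=
    (Summable.tsum_comm hbu).symm
  have hinner3 : ∀ n : ℕ, (∑' l : ℕ, b l n) =
      (((q:ℂ)-1) * Complex.exp s * s) * (xf q z n ^ ν * Complex.exp (-(s * xf q z n))) := by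
    intro n
    have hterm : ∀ l : ℕ, b l n =
        ((((q:ℂ)-1) * Complex.exp s * s) * xf q z n ^ ν) *
          ((-(s * xf q z n))^l / (Nat.factorial l : ℂ)) := by
      intro l
      simp only [hb]
      rw [neg_pow (s * xf q z n), mul_pow, pow_add, pow_succ]
      ring
    rw [tsum_congr hterm, tsum_mul_left, ← exp_tsum]
    ring
  -- assemble
  calc (∑' m : ℕ, ((q:ℂ)-1) * s^m / (Nat.factorial m : ℂ) *
      (∑ l ∈ Finset.Icc 1 m, (-1)^l * (Nat.choose m l : ℂ) * (l:ℂ) * Qf q ν z l))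
      = ∑' m : ℕ, ∑' l : ℕ, T m l := tsum_congr hg_eq
    _ = ∑' p : ℕ×ℕ, T p.1 p.2 := (Summable.tsum_prod hTsum).symm
    _ = ∑' p : ℕ×ℕ, T (p.1+1+p.2) (p.1+1) := by
        refine (he_inj.tsum_eq (f := fun p : ℕ×ℕ => T p.1 p.2) ?_).symm
        intro x hx
        by_contra h
        exact hx (hT0 x h)
    _ = ∑' l : ℕ, ∑' j : ℕ, T (l+1+j) (l+1) := Summable.tsum_prod hasum.of_norm
    _ = ∑' l : ℕ, ∑' n : ℕ, b l n := by
        refine tsum_congr fun l => ?_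
        rw [hinner2 l, hcl l]
    _ = ∑' n : ℕ, ∑' l : ℕ, b l n := hswap
    _ = ∑' n : ℕ, (((q:ℂ)-1) * Complex.exp s * s) *
          (xf q z n ^ ν * Complex.exp (-(s * xf q z n))) := tsum_congr hinner3
    _ = ((q:ℂ)-1) * Complex.exp s * s *
          ∑' n : ℕ, xf q z n ^ ν * Complex.exp (-(s * xf q z n)) := tsum_mul_left

theorem stmt12 (q : ℝ) (hq0 : 0 < q) (hq1 : q < 1) (ν : ℕ) (hν : 0 < ν) (z : ℂ) :
    ∀ t : ℂ,
      Summable (fun m : ℕ => ‖(-1) ^ m * Bq q ν z m * t ^ m / (Nat.factorial m : ℂ)‖) ∧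
      -((((1 - q) ^ ν : ℝ) : ℂ) / (Real.log q : ℂ)) * (Nat.factorial (ν - 1) : ℂ) *
          Complex.exp (t / (1 - (q : ℂ))) -
        t ^ ν * ∑' n : ℕ, qpow q ((ν : ℂ) * (((n : ℂ) + 1) - z)) *
          Complex.exp (t * qbr q (((n : ℂ) + 1) - z)) =
      -((Nat.factorial (ν - 1) : ℂ) / (Real.log q : ℂ)) *
          (∑ n ∈ Finset.range (ν - 1),
            (((1 - q) ^ (ν - n) : ℝ) : ℂ) * t ^ n / (Nat.factorial n : ℂ)) +
        t ^ (ν - 1) * ∑' m : ℕ, (-1) ^ m * Bq q ν z m * t ^ m / (Nat.factorial m : ℂ) := by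
  obtain ⟨k, rfl⟩ : ∃ k, ν = k + 1 := ⟨ν - 1, by omega⟩
  intro t
  simp only [Nat.add_sub_cancel]
  set L := Real.log q with hLdef
  have hL : L < 0 := Real.log_neg hq0 hq1
  have hLne : ((L:ℝ):ℂ) ≠ 0 := by exact_mod_cast hL.ne
  have hq1c : ((q:ℂ) - 1) ≠ 0 := by
    intro h
    have h2 : (q:ℂ) = 1 := by linear_combination h
    exact hq1.ne (by exact_mod_cast h2)
  have h1qc : (1 - (q:ℂ)) ≠ 0 := fun h => hq1c (by linear_combination -h)
  set s := t / (1 - (q:ℂ)) with hs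
  have hts : t = (1 - (q:ℂ)) * s := by
    rw [hs]; field_simp
  -- rewrite the m-th term
  have hcollapse : ((-1:ℂ) * ((q:ℂ)-1)⁻¹ * (1-(q:ℂ))) = 1 := by
    field_simp
    ring
  have hBq : ∀ m : ℕ, (-1)^m * Bq q (k+1) z m * t^m / (Nat.factorial m : ℂ)
      = ((q:ℂ)-1) * s^m / (Nat.factorial m : ℂ) *
          (∑ l ∈ Finset.Icc 1 m, (-1)^l * (Nat.choose m l : ℂ) * (l:ℂ) * Qf q (k+1) z l)
        + (((q:ℂ)-1) / ((L:ℝ):ℂ) * (Nat.factorial k : ℂ)) *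
            (s^m / (((m+k).factorial : ℕ) : ℂ)) := by
    intro m
    have hmν : m + (k+1) - 1 = m + k := by omega
    have hk1 : k + 1 - 1 = k := by omega
    have hzp : ((q:ℂ)-1)^((1:ℤ) - m) = ((q:ℂ)-1) * (((q:ℂ)-1)⁻¹)^m := by
      rw [zpow_sub₀ hq1c, zpow_one, zpow_natCast, div_eq_mul_inv, inv_pow]
    have hA : (-1:ℂ)^m * ((q:ℂ)-1)^((1:ℤ)-m) * t^m = ((q:ℂ)-1) * s^m := by
      rw [hzp, hts, mul_pow]
      calc (-1:ℂ)^m * (((q:ℂ)-1) * (((q:ℂ)-1)⁻¹)^m) * ((1-(q:ℂ))^m * s^m)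
          = ((q:ℂ)-1) * (((-1:ℂ) * ((q:ℂ)-1)⁻¹ * (1-(q:ℂ)))^m * s^m) := by
            rw [mul_pow, mul_pow]; ring
        _ = ((q:ℂ)-1) * s^m := by rw [hcollapse, one_pow, one_mul]
    have hchoose : (((m+k).choose k : ℕ) : ℂ) * (Nat.factorial m : ℂ) * (Nat.factorial k : ℂ)
        = (((m+k).factorial : ℕ) : ℂ) := by
      exact_mod_cast Nat.add_choose_mul_factorial_mul_factorial m k
    have hchne : (((m+k).choose k : ℕ) : ℂ) ≠ 0 := by
      have h := Nat.choose_pos (show k ≤ m+k by omega)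
      exact_mod_cast h.ne'
    have hfm : ((Nat.factorial m : ℂ)) ≠ 0 := by exact_mod_cast m.factorial_ne_zero
    have hfk : ((Nat.factorial k : ℂ)) ≠ 0 := by exact_mod_cast k.factorial_ne_zero
    have hfmk : (((m+k).factorial : ℕ) : ℂ) ≠ 0 := by exact_mod_cast (m+k).factorial_ne_zero
    have hPP : (∑ l ∈ Finset.Icc 1 m, (-1:ℂ)^l * (Nat.choose m l : ℂ) * (l:ℂ) *
          qpow q (z * (1 - (l:ℂ) - ((k+1:ℕ):ℂ))) / (1 - qpow q (1 - (l:ℂ) - ((k+1:ℕ):ℂ))))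
        = ∑ l ∈ Finset.Icc 1 m, (-1:ℂ)^l * (Nat.choose m l : ℂ) * (l:ℂ) * Qf q (k+1) z l := by
      refine Finset.sum_congr rfl fun l _ => ?_
      rw [Qf, mul_div_assoc]
    calc (-1:ℂ)^m * Bq q (k+1) z m * t^m / (Nat.factorial m : ℂ)
        = ((-1:ℂ)^m * ((q:ℂ)-1)^((1:ℤ)-m) * t^m) *
            ((∑ l ∈ Finset.Icc 1 m, (-1:ℂ)^l * (Nat.choose m l : ℂ) * (l:ℂ) *
              qpow q (z * (1 - (l:ℂ) - ((k+1:ℕ):ℂ))) / (1 - qpow q (1 - (l:ℂ) - ((k+1:ℕ):ℂ))))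
             + (1 / (((m+k).choose k : ℕ) : ℂ)) * (1 / ((L:ℝ):ℂ))) / (Nat.factorial m : ℂ) := by
          rw [Bq, hmν, hk1]
          push_cast
          ring
      _ = (((q:ℂ)-1) * s^m) *
            ((∑ l ∈ Finset.Icc 1 m, (-1:ℂ)^l * (Nat.choose m l : ℂ) * (l:ℂ) * Qf q (k+1) z l)
             + (1 / (((m+k).choose k : ℕ) : ℂ)) * (1 / ((L:ℝ):ℂ))) / (Nat.factorial m : ℂ) := by
          rw [hA, hPP]
      _ = ((q:ℂ)-1) * s^m / (Nat.factorial m : ℂ) *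
            (∑ l ∈ Finset.Icc 1 m, (-1:ℂ)^l * (Nat.choose m l : ℂ) * (l:ℂ) * Qf q (k+1) z l)
          + (((q:ℂ)-1) / ((L:ℝ):ℂ) * (Nat.factorial k : ℂ)) *
              (s^m / (((m+k).factorial : ℕ) : ℂ)) := by
          have hinv : (1:ℂ) / (((m+k).choose k : ℕ) : ℂ)
              = (Nat.factorial k : ℂ) * (Nat.factorial m : ℂ) / (((m+k).factorial : ℕ) : ℂ) := by
            rw [div_eq_div_iff hchne hfmk, one_mul]
            linear_combination -hchoose
          rw [hinv]
          field_simp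
  -- the two families
  obtain ⟨hgnorm, hgval⟩ := gsum hq0 hq1 (show 0 < k+1 by omega) z s
  set cst := ((q:ℂ)-1) / ((L:ℝ):ℂ) * (Nat.factorial k : ℂ) with hcst
  have hhnorm : Summable (fun m : ℕ => ‖cst * (s^m / (((m+k).factorial : ℕ) : ℂ))‖) := by
    refine Summable.of_nonneg_of_le (fun m => norm_nonneg _) (fun m => ?_)
      ((Real.summable_pow_div_factorial ‖s‖).mul_left ‖cst‖)
    rw [norm_mul, norm_div, norm_pow, Complex.norm_natCast]
    have h1 : ((Nat.factorial m : ℝ)) ≤ (((m+k).factorial : ℕ) : ℝ) := by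
      exact_mod_cast Nat.factorial_le (show m ≤ m + k by omega)
    have h2 : (0:ℝ) < (Nat.factorial m : ℝ) := by positivity
    have h3 : ‖s‖^m / (((m+k).factorial : ℕ) : ℝ) ≤ ‖s‖^m / (Nat.factorial m : ℝ) := by
      apply div_le_div_of_nonneg_left (by positivity) h2 h1
    calc ‖cst‖ * (‖s‖^m / (((m+k).factorial : ℕ) : ℝ))
        ≤ ‖cst‖ * (‖s‖^m / (Nat.factorial m : ℝ)) :=
          mul_le_mul_of_nonneg_left h3 (norm_nonneg _)
      _ = ‖cst‖ * (‖s‖^m / (Nat.factorial m : ℝ)) := rfl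
  -- claim 1 : summability
  have hsum1 : Summable (fun m : ℕ => ‖(-1)^m * Bq q (k+1) z m * t^m / (Nat.factorial m : ℂ)‖) := by
    refine Summable.of_nonneg_of_le (fun m => norm_nonneg _) (fun m => ?_) (hgnorm.add hhnorm)
    rw [hBq m]
    exact norm_add_le _ _
  refine ⟨hsum1, ?_⟩
  -- split the tsum
  have hsplit : (∑' m : ℕ, (-1)^m * Bq q (k+1) z m * t^m / (Nat.factorial m : ℂ))
      = (∑' m : ℕ, ((q:ℂ)-1) * s^m / (Nat.factorial m : ℂ) *
          (∑ l ∈ Finset.Icc 1 m, (-1)^l * (Nat.choose m l : ℂ) * (l:ℂ) * Qf q (k+1) z l))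
        + ∑' m : ℕ, cst * (s^m / (((m+k).factorial : ℕ) : ℂ)) := by
    rw [tsum_congr hBq]
    exact Summable.tsum_add hgnorm.of_norm hhnorm.of_norm
  -- evaluate the h-part (multiplied by t^k)
  have hE : Summable (fun i : ℕ => s^i / (Nat.factorial i : ℂ)) := (summable_norm_exp_div s).of_norm
  have htail : (∑ i ∈ Finset.range k, s^i / (Nat.factorial i : ℂ))
      + (∑' i : ℕ, s^(i+k) / (Nat.factorial (i+k) : ℂ)) = Complex.exp s := by
    rw [exp_tsum s]
    exact hE.sum_add_tsum_nat_add k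
  have hhval : t^k * ∑' m : ℕ, cst * (s^m / (((m+k).factorial : ℕ) : ℂ))
      = (cst * (1-(q:ℂ))^k) *
          (Complex.exp s - ∑ i ∈ Finset.range k, s^i / (Nat.factorial i : ℂ)) := by
    rw [← tsum_mul_left]
    have hterm : ∀ m : ℕ, t^k * (cst * (s^m / (((m+k).factorial : ℕ) : ℂ)))
        = (cst * (1-(q:ℂ))^k) * (s^(m+k) / (Nat.factorial (m+k) : ℂ)) := by
      intro m
      rw [hts, mul_pow, pow_add]
      ring
    rw [tsum_congr hterm, tsum_mul_left]
    congr 1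
    linear_combination htail
  -- the statement's n-series
  have hterm_n : ∀ n : ℕ, qpow q (((k+1:ℕ):ℂ) * (((n:ℂ) + 1) - z)) *
        Complex.exp (t * qbr q (((n:ℂ) + 1) - z))
      = Complex.exp s * (xf q z n ^ (k+1) * Complex.exp (-(s * xf q z n))) := by
    intro n
    have h1 : qpow q (((k+1:ℕ):ℂ) * (((n:ℂ) + 1) - z)) = xf q z n ^ (k+1) := by
      rw [qpow_nat_mul']
      rfl
    have h2 : t * qbr q (((n:ℂ) + 1) - z) = s - s * xf q z n := by
      rw [qbr, hs]
      have : qpow q (((n:ℂ) + 1) - z) = xf q z n := rfl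
      rw [this]
      field_simp
    rw [h1, h2, sub_eq_add_neg, Complex.exp_add]
    ring
  have hstmt_sum : (∑' n : ℕ, qpow q (((k+1:ℕ):ℂ) * (((n:ℂ) + 1) - z)) *
        Complex.exp (t * qbr q (((n:ℂ) + 1) - z)))
      = Complex.exp s * ∑' n : ℕ, xf q z n ^ (k+1) * Complex.exp (-(s * xf q z n)) := by
    rw [tsum_congr hterm_n, tsum_mul_left]
  -- the finite sum identity
  have hfin : (∑ n ∈ Finset.range k, (((1 - q) ^ (k+1-n) : ℝ) : ℂ) * t^n / (Nat.factorial n : ℂ))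
      = (1-(q:ℂ))^(k+1) * ∑ n ∈ Finset.range k, s^n / (Nat.factorial n : ℂ) := by
    rw [Finset.mul_sum]
    refine Finset.sum_congr rfl fun n hn => ?_
    rw [Finset.mem_range] at hn
    have hpow : (1-(q:ℂ))^(k+1-n) * (1-(q:ℂ))^n = (1-(q:ℂ))^(k+1) := by
      rw [← pow_add]
      congr 1
      omega
    push_cast
    rw [hts, mul_pow, div_eq_mul_inv, div_eq_mul_inv]
    linear_combination (s^n * ((Nat.factorial n : ℂ))⁻¹) * hpow
  -- assemble
  have hcast : ((((1 - q) ^ (k+1) : ℝ)) : ℂ) = (1-(q:ℂ))^(k+1) := by push_cast; ring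
  rw [hsplit, hstmt_sum, hfin, hcast, mul_add, hhval, hgval, hcst]
  rw [pow_succ t k, hts]
  ring
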